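/- For natural transformations between tensor power functors over a field k: Hom(T_n, T_m) = 0 if n ≠ m, and End(T_n) is isomorphic as a ring to the group algebra k(Σ_n), where T_n(V) = V^{⊗n} and a permutation σ ∈ Σ_n acts on V^{⊗n} by permuting tensor factors. -/

import Mathlib

open scoped TensorProduct

/-- The action of a permutation `σ ∈ Σ_n` on the tensor power `V^{⊗n}`, permuting the tensor
factors. -/
noncomputable def permT (k : Type) [Field k] (n : ℕ) (V : Type) [AddCommGroup V] [Module k V]
    (σ : Equiv.Perm (Fin n)) : (⨂[k] (i : Fin n), V) →ₗ[k] ⨂[k] (i : Fin n), V :=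
  (PiTensorProduct.reindex k (fun _ : Fin n => V) σ).toLinearMap

/-- The action of an element of the group algebra `k(Σ_n)` on `V^{⊗n}`, extending `permT`
linearly. -/
noncomputable def permAct (k : Type) [Field k] (n : ℕ) (V : Type) [AddCommGroup V] [Module k V]
    (a : MonoidAlgebra k (Equiv.Perm (Fin n))) :
    (⨂[k] (i : Fin n), V) →ₗ[k] ⨂[k] (i : Fin n), V :=
  a.coeff.sum fun σ c => c • permT k n V σ

noncomputable section SchurAux
open PiTensorProduct

variable {k : Type} [Field k]

def lam {p : ℕ} {ι : Type} (c : Fin p → ι) :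
    (⨂[k] (_ : Fin p), (ι → k)) →ₗ[k] k :=
  PiTensorProduct.lift ((MultilinearMap.mkPiAlgebra k (Fin p) k).compLinearMap
    (fun i => LinearMap.proj (c i)))

@[simp] lemma lam_tprod {p : ℕ} {ι : Type} (c : Fin p → ι) (v : Fin p → ι → k) :
    lam c (tprod k v) = ∏ i, v i (c i) := by
  simp [lam]

def EE {p : ℕ} {ι : Type} [DecidableEq ι] (b : Fin p → ι) :
    ⨂[k] (_ : Fin p), (ι → k) :=
  tprod k (fun i => Pi.single (b i) 1)

lemma lam_EE {p : ℕ} {ι : Type} [DecidableEq ι] (c b : Fin p → ι) :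
    lam (k := k) c (EE b) = if b = c then 1 else 0 := by
  rw [EE, lam_tprod]
  by_cases h : b = c
  · subst h; simp
  · obtain ⟨i, hi⟩ := Function.ne_iff.1 h
    rw [if_neg h]
    exact Finset.prod_eq_zero (Finset.mem_univ i) (by simp [Pi.single_apply, hi])

lemma expand {p : ℕ} {ι : Type} [Fintype ι] [DecidableEq ι]
    (y : ⨂[k] (_ : Fin p), (ι → k)) :
    y = ∑ b : Fin p → ι, lam b y • EE b := by
  have : (LinearMap.id : (⨂[k] (_ : Fin p), (ι → k)) →ₗ[k] _)
      = ∑ b : Fin p → ι, (lam b).smulRight (EE b) := by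
    refine PiTensorProduct.ext (MultilinearMap.ext fun v => ?_)
    simp only [LinearMap.compMultilinearMap_apply, LinearMap.id_apply]
    simp only [LinearMap.sum_apply, LinearMap.smulRight_apply, lam_tprod]
    have hv : ∀ i, v i = ∑ j : ι, v i j • (Pi.single j 1 : ι → k) := by
      intro i
      funext t
      simp [Pi.single_apply, Finset.sum_ite_eq', mul_comm]
    have h1 : (PiTensorProduct.tprod k) v
        = (PiTensorProduct.tprod k) (fun i => ∑ j : ι, v i j • (Pi.single j 1 : ι → k)) := by
      congr 1; funext i; exact hv i
    rw [h1, MultilinearMap.map_sum]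
    refine Finset.sum_congr rfl fun b _ => ?_
    rw [MultilinearMap.map_smul_univ]
    rfl
  conv_lhs => rw [← LinearMap.id_apply (R := k) y, this]
  simp

lemma lam_map {p : ℕ} {ι ι' : Type} [Fintype ι] [DecidableEq ι]
    (F : (ι → k) →ₗ[k] (ι' → k)) (c : Fin p → ι') (y : ⨂[k] (_ : Fin p), (ι → k)) :
    lam c (PiTensorProduct.map (fun _ => F) y)
      = ∑ b : Fin p → ι, lam b y * ∏ i, F (Pi.single (b i) 1) (c i) := by
  conv_lhs => rw [expand y]
  simp only [map_sum, map_smul, smul_eq_mul]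
  refine Finset.sum_congr rfl fun b _ => ?_
  rw [EE, PiTensorProduct.map_tprod, lam_tprod]

section Nat

variable {n m : ℕ}

/-- standard basis of `Fin n → k` -/
def eb (n : ℕ) : Fin n → (Fin n → k) := fun i => Pi.single i 1

/-- the linear map `Fin n → k → V` sending the basis to `v` -/
def fv {V : Type} [AddCommGroup V] [Module k V] (v : Fin n → V) :
    (Fin n → k) →ₗ[k] V :=
  ∑ i, (LinearMap.proj i : (Fin n → k) →ₗ[k] k).smulRight (v i)

lemma fv_single {V : Type} [AddCommGroup V] [Module k V] (v : Fin n → V) (i : Fin n) :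
    fv (k := k) v (Pi.single i 1) = v i := by
  simp only [fv, LinearMap.sum_apply, LinearMap.smulRight_apply, LinearMap.proj_apply,
    Pi.single_apply, ite_smul, one_smul, zero_smul]
  simp

lemma map_fv_tprod_eb {V : Type} [AddCommGroup V] [Module k V] (v : Fin n → V) :
    PiTensorProduct.map (fun _ : Fin n => fv v) (tprod k (eb (k := k) n)) = tprod k v := by
  rw [PiTensorProduct.map_tprod]
  congr 1
  funext i
  exact fv_single v i

variable (η : ∀ (V : Type) [AddCommGroup V] [Module k V],
        (⨂[k] (i : Fin n), V) →ₗ[k] ⨂[k] (i : Fin m), V)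

variable (hη : ∀ (V W : Type) [AddCommGroup V] [Module k V] [AddCommGroup W] [Module k W]
        (f : V →ₗ[k] W),
        (η W).comp (PiTensorProduct.map fun _ : Fin n => f)
          = (PiTensorProduct.map fun _ : Fin m => f).comp (η V))

include hη

lemma det {V : Type} [AddCommGroup V] [Module k V] (v : Fin n → V) :
    η V (tprod k v)
      = PiTensorProduct.map (fun _ : Fin m => fv v)
          (η (Fin n → k) (tprod k (eb (k := k) n))) := by
  have h := LinearMap.congr_fun (hη (Fin n → k) V (fv v)) (tprod k (eb (k := k) n))
  simp only [LinearMap.comp_apply] at h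
  rw [map_fv_tprod_eb] at h
  exact h

lemma coeffA (j : Fin n) (c : Fin m → Fin n) (hj : ∀ i, c i ≠ j) :
    lam c (η (Fin n → k) (tprod k (eb (k := k) n))) = 0 := by
  classical
  set P : (Fin n → k) →ₗ[k] (Fin n → k) :=
    LinearMap.pi (fun i : Fin n => if i = j then 0 else LinearMap.proj i) with hP
  have hPapp : ∀ (w : Fin n → k) (s : Fin n), P w s = if s = j then 0 else w s := by
    intro w s
    rw [hP, LinearMap.pi_apply]
    by_cases h : s = j <;> simp [h]
  -- the source dies under P
  have hsrc : PiTensorProduct.map (fun _ : Fin n => P) (tprod k (eb (k := k) n)) = 0 := by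
    rw [PiTensorProduct.map_tprod]
    refine MultilinearMap.map_coord_zero _ j ?_
    funext s
    rw [eb, hPapp]
    by_cases h : s = j <;> simp [h, Pi.single_apply]
  have h := LinearMap.congr_fun (hη (Fin n → k) (Fin n → k) P) (tprod k (eb (k := k) n))
  rw [LinearMap.comp_apply, LinearMap.comp_apply, hsrc, LinearMap.map_zero] at h
  -- h : 0 = map P (η _ (tprod eb))
  have h2 : lam c (PiTensorProduct.map (fun _ : Fin m => P)
      (η (Fin n → k) (tprod k (eb (k := k) n)))) = 0 := by
    rw [← h]; exact LinearMap.map_zero _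
  rw [lam_map] at h2
  rw [← h2]
  rw [Finset.sum_eq_single c]
  · have : ∀ i : Fin m, P (Pi.single (c i) 1) (c i) = 1 := by
      intro i; rw [hPapp]; simp [hj i]
    simp [this]
  · intro b _ hb
    obtain ⟨i, hi⟩ := Function.ne_iff.1 hb
    refine mul_eq_zero_of_right _ (Finset.prod_eq_zero (Finset.mem_univ i) ?_)
    rw [hPapp, if_neg (hj i), Pi.single_apply, if_neg (fun h' => hi h'.symm)]
  · simp


lemma coeffB (c₀ : Fin m → Fin n) (i₁ i₂ : Fin m) (h12 : i₁ ≠ i₂) (hc : c₀ i₁ = c₀ i₂) :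
    lam c₀ (η (Fin n → k) (tprod k (eb (k := k) n))) = 0 := by
  classical
  set j : Fin n := c₀ i₁ with hj
  set y := η (Fin n → k) (tprod k (eb (k := k) n)) with hy
  set O := Option (Fin n) with hO
  set sfun : Fin n → (O → k) := fun i => Pi.single (some i) 1 with hsfun
  set iota : (Fin n → k) →ₗ[k] (O → k) :=
    LinearMap.pi (fun o : O => o.elim 0 (fun t => LinearMap.proj t)) with hiota
  have iota_single : ∀ i : Fin n, iota (Pi.single i 1) = Pi.single (some i) 1 := by
    intro i
    funext o
    cases o with
    | none => simp [hiota, LinearMap.pi_apply]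
    | some t => simp [hiota, LinearMap.pi_apply, Pi.single_apply]
  have hbar : (PiTensorProduct.tprod k) sfun = PiTensorProduct.map (fun _ : Fin n => iota)
      (tprod k (eb (k := k) n)) := by
    rw [PiTensorProduct.map_tprod]
    congr 1
    funext i
    rw [eb, iota_single]
  have hxbar : η (O → k) (tprod k sfun) = PiTensorProduct.map (fun _ : Fin m => iota) y := by
    rw [hbar]
    exact LinearMap.congr_fun (hη (Fin n → k) (O → k) iota) (tprod k (eb (k := k) n))
  -- vanishing of coefficients hitting `none`
  have hS : ∀ c' : Fin m → O, (∃ i₀, c' i₀ = none) →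
      lam c' (PiTensorProduct.map (fun _ : Fin m => iota) y) = 0 := by
    rintro c' ⟨i₀, hi₀⟩
    rw [lam_map]
    refine Finset.sum_eq_zero fun b _ => ?_
    refine mul_eq_zero_of_right _ (Finset.prod_eq_zero (Finset.mem_univ i₀) ?_)
    rw [iota_single, hi₀, Pi.single_apply, if_neg (by simp)]
  -- coefficients not hitting `none` pull back
  have hS' : ∀ cf : Fin m → Fin n,
      lam (fun i => (some (cf i) : O)) (PiTensorProduct.map (fun _ : Fin m => iota) y)
        = lam cf y := by
    intro cf
    rw [lam_map]
    rw [Finset.sum_eq_single cf]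
    · have : ∀ i : Fin m, iota (Pi.single (cf i) 1) (some (cf i)) = 1 := by
        intro i; rw [iota_single]; simp
      simp [this]
    · intro b _ hb
      obtain ⟨i, hi⟩ := Function.ne_iff.1 hb
      refine mul_eq_zero_of_right _ (Finset.prod_eq_zero (Finset.mem_univ i) ?_)
      rw [iota_single, Pi.single_apply, if_neg (by simpa using fun h' => hi h'.symm)]
    · simp
  -- the swap map
  set sw : O ≃ O := Equiv.swap (some j) none with hsw
  set G : (O → k) →ₗ[k] (O → k) := LinearMap.funLeft k k ⇑sw with hG
  have G_single : ∀ o : O, G (Pi.single o 1) = Pi.single (sw o) 1 := by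
    intro o
    funext t
    rw [hG]
    simp only [LinearMap.funLeft_apply, Pi.single_apply]
    have : sw t = o ↔ t = sw o := by
      constructor
      · intro h; rw [← h, hsw, Equiv.swap_apply_self]
      · intro h; rw [h, hsw, Equiv.swap_apply_self]
    by_cases h : t = sw o
    · rw [if_pos (this.2 h), if_pos h]
    · rw [if_neg (fun h' => h (this.1 h')), if_neg h]
  -- the addition map
  set FJ : (O → k) →ₗ[k] (O → k) :=
    LinearMap.id + (LinearMap.single k (fun _ : O => k) none).comp
      (LinearMap.proj (some j)) with hFJ
  have FJ_single : ∀ o : O, FJ (Pi.single o 1)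
      = Pi.single o 1 + if o = some j then Pi.single none 1 else 0 := by
    intro o
    rw [hFJ]
    simp only [LinearMap.add_apply, LinearMap.id_apply, LinearMap.comp_apply,
      LinearMap.proj_apply, LinearMap.single_apply]
    congr 1
    by_cases h : o = some j
    · rw [if_pos h, h, Pi.single_apply, if_pos rfl]
    · rw [if_neg h, Pi.single_apply, if_neg (fun h' => h h'.symm)]
      simp
  -- the main identity
  have main : PiTensorProduct.map (fun _ : Fin m => iota) y
        + PiTensorProduct.map (fun _ : Fin m => G)
            (PiTensorProduct.map (fun _ : Fin m => iota) y)
      = PiTensorProduct.map (fun _ : Fin m => FJ)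
            (PiTensorProduct.map (fun _ : Fin m => iota) y) := by
    have hnat := LinearMap.congr_fun (hη (O → k) (O → k) FJ) (tprod k sfun)
    rw [LinearMap.comp_apply, LinearMap.comp_apply, PiTensorProduct.map_tprod] at hnat
    have claim1 : (fun i => FJ (sfun i))
        = Function.update sfun j (sfun j + Pi.single none 1) := by
      funext i
      by_cases h : i = j
      · subst h
        rw [Function.update_self]
        show FJ (Pi.single (some j) 1) = sfun j + Pi.single none 1
        rw [FJ_single, if_pos rfl]
      · rw [Function.update_of_ne h]
        show FJ (Pi.single (some i) 1) = sfun i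
        rw [FJ_single, if_neg (fun hh => h (Option.some.inj hh)), add_zero]
    have claim2 : Function.update sfun j (Pi.single none 1) = fun i => G (sfun i) := by
      funext i
      by_cases h : i = j
      · subst h
        rw [Function.update_self, hsfun, G_single]
        simp [hsw]
      · rw [Function.update_of_ne h]
        show sfun i = G (Pi.single (some i) 1)
        rw [G_single, hsw,
          Equiv.swap_apply_of_ne_of_ne (fun hh => h (Option.some.inj hh)) (by simp)]
    rw [claim1, MultilinearMap.map_update_add, Function.update_eq_self, claim2] at hnat
    have hg : (PiTensorProduct.tprod k) (fun i => G (sfun i)) = PiTensorProduct.map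
        (fun _ : Fin n => G) (tprod k sfun) := (PiTensorProduct.map_tprod _ sfun).symm
    rw [hg, map_add] at hnat
    have hG2 := LinearMap.congr_fun (hη (O → k) (O → k) G) (tprod k sfun)
    rw [LinearMap.comp_apply, LinearMap.comp_apply] at hG2
    rw [hG2, hxbar] at hnat
    exact hnat
  -- extract the coefficient at c'
  set c' : Fin m → O := Function.update (fun i => (some (c₀ i) : O)) i₁ none with hc'
  have hc'i₁ : c' i₁ = none := Function.update_self _ _ _
  have hc'ne : ∀ i, i ≠ i₁ → c' i = some (c₀ i) := fun i h => Function.update_of_ne h _ _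
  have eq0 : lam c' (PiTensorProduct.map (fun _ : Fin m => iota) y) = 0 :=
    hS c' ⟨i₁, hc'i₁⟩
  have eq1 : lam c' (PiTensorProduct.map (fun _ : Fin m => G)
      (PiTensorProduct.map (fun _ : Fin m => iota) y)) = 0 := by
    rw [lam_map]
    rw [Finset.sum_eq_single (fun i => sw (c' i))]
    · refine mul_eq_zero_of_left ?_ _
      refine hS _ ⟨i₂, ?_⟩
      show sw (c' i₂) = none
      rw [hc'ne i₂ (Ne.symm h12), ← hc, hsw, Equiv.swap_apply_left]
    · intro b _ hb
      obtain ⟨i, hi⟩ := Function.ne_iff.1 hb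
      refine mul_eq_zero_of_right _ (Finset.prod_eq_zero (Finset.mem_univ i) ?_)
      rw [G_single, Pi.single_apply, if_neg]
      intro h'
      exact hi (by rw [h', hsw, Equiv.swap_apply_self])
    · simp
  have eq2 : lam c' (PiTensorProduct.map (fun _ : Fin m => FJ)
      (PiTensorProduct.map (fun _ : Fin m => iota) y)) = lam c₀ y := by
    rw [lam_map]
    rw [Finset.sum_eq_single (fun i => (some (c₀ i) : O))]
    · rw [hS']
      have : ∀ i : Fin m, FJ (Pi.single (some (c₀ i) : O) 1) (c' i) = 1 := by
        intro i
        rw [FJ_single]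
        by_cases h : i = i₁
        · subst h
          rw [hc'i₁, ← hj]
          simp
        · rw [hc'ne i h]
          simp only [Pi.add_apply, Pi.single_apply, if_pos rfl]
          by_cases h2 : (some (c₀ i) : O) = some j
          · rw [if_pos h2]; simp
          · rw [if_neg h2]; simp
      simp [this]
    · intro b _ hb
      by_cases hnone : ∃ i₀, b i₀ = none
      · exact mul_eq_zero_of_left (hS b hnone) _
      · push_neg at hnone
        obtain ⟨i, hi⟩ := Function.ne_iff.1 hb
        refine mul_eq_zero_of_right _ (Finset.prod_eq_zero (Finset.mem_univ i) ?_)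
        rw [FJ_single]
        by_cases h : i = i₁
        · rw [h] at hi ⊢
          rw [hc'i₁]
          simp only [Pi.add_apply]
          rw [Pi.single_apply, if_neg (by exact fun h' => hnone i₁ h'.symm)]
          by_cases h2 : b i₁ = some j
          · exact absurd (by rw [h2, hj]) hi
          · rw [if_neg h2]; simp
        · rw [hc'ne i h]
          simp only [Pi.add_apply]
          rw [Pi.single_apply, if_neg (fun h' => hi h'.symm)]
          by_cases h2 : b i = some j
          · rw [if_pos h2, Pi.single_apply, if_neg (by simp)]; simp
          · rw [if_neg h2]; simp
    · simp
  have := congrArg (fun z => lam (k := k) c' z) main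
  simp only at this
  rw [LinearMap.map_add, eq0, eq1, eq2, zero_add] at this
  exact this.symm

end Nat
end SchurAux


noncomputable section SchurAux2
open PiTensorProduct

variable {k : Type} [Field k] {n : ℕ} {V : Type} [AddCommGroup V] [Module k V]

lemma permT_tprod (σ : Equiv.Perm (Fin n)) (v : Fin n → V) :
    permT k n V σ (tprod k v) = tprod k (fun i => v (σ.symm i)) := by
  simp [permT]

def permTHom (k : Type) [Field k] (n : ℕ) (V : Type) [AddCommGroup V] [Module k V] :
    Equiv.Perm (Fin n) →* Module.End k (⨂[k] (i : Fin n), V) where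
  toFun σ := permT k n V σ
  map_one' := by
    refine PiTensorProduct.ext (MultilinearMap.ext fun v => ?_)
    simp only [LinearMap.compMultilinearMap_apply]
    show permT k n V 1 ((PiTensorProduct.tprod k) v) = (PiTensorProduct.tprod k) v
    rw [permT_tprod]
    rfl
  map_mul' σ τ := by
    refine PiTensorProduct.ext (MultilinearMap.ext fun v => ?_)
    simp only [LinearMap.compMultilinearMap_apply]
    rw [show ∀ z, (permT k n V σ * permT k n V τ) z = permT k n V σ (permT k n V τ z)
      from fun _ => rfl]
    rw [permT_tprod, permT_tprod, permT_tprod]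
    rfl

lemma permAct_eq_lift (a : MonoidAlgebra k (Equiv.Perm (Fin n))) :
    permAct k n V a = MonoidAlgebra.lift k
      (Module.End k (⨂[k] (i : Fin n), V)) (Equiv.Perm (Fin n)) (permTHom k n V) a := by
  rw [MonoidAlgebra.lift_apply]
  rfl

lemma permT_comm_map {W : Type} [AddCommGroup W] [Module k W] (F : V →ₗ[k] W)
    (σ : Equiv.Perm (Fin n)) (z : ⨂[k] (i : Fin n), V) :
    permT k n W σ (PiTensorProduct.map (fun _ : Fin n => F) z)
      = PiTensorProduct.map (fun _ : Fin n => F) (permT k n V σ z) := by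
  have := PiTensorProduct.map_reindex (fun _ : Fin n => F) σ z
  exact this.symm

lemma permAct_comm_map {W : Type} [AddCommGroup W] [Module k W] (F : V →ₗ[k] W)
    (a : MonoidAlgebra k (Equiv.Perm (Fin n))) (z : ⨂[k] (i : Fin n), V) :
    permAct k n W a (PiTensorProduct.map (fun _ : Fin n => F) z)
      = PiTensorProduct.map (fun _ : Fin n => F) (permAct k n V a z) := by
  rw [permAct, permAct, Finsupp.sum, Finsupp.sum, LinearMap.sum_apply, LinearMap.sum_apply,
    map_sum]
  refine Finset.sum_congr rfl fun σ _ => ?_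
  rw [LinearMap.smul_apply, LinearMap.smul_apply, map_smul, permT_comm_map]

end SchurAux2



open PiTensorProduct in
/-- `Hom(T_n, T_m) = 0` for `n ≠ m`, and `End(T_n) ≅ k(Σ_n)` as a ring: every natural
transformation `T_n → T_n` is given by a unique element of the group algebra acting by permuting
tensor factors, and this correspondence is multiplicative. -/
theorem stmt1 (k : Type) [Field k] (n m : ℕ)
    (η : ∀ (V : Type) [AddCommGroup V] [Module k V],
        (⨂[k] (i : Fin n), V) →ₗ[k] ⨂[k] (i : Fin m), V)
    (hη : ∀ (V W : Type) [AddCommGroup V] [Module k V] [AddCommGroup W] [Module k W]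
        (f : V →ₗ[k] W),
        (η W).comp (PiTensorProduct.map fun _ : Fin n => f)
          = (PiTensorProduct.map fun _ : Fin m => f).comp (η V))
    (δ : ∀ (V : Type) [AddCommGroup V] [Module k V],
        (⨂[k] (i : Fin n), V) →ₗ[k] ⨂[k] (i : Fin n), V)
    (hδ : ∀ (V W : Type) [AddCommGroup V] [Module k V] [AddCommGroup W] [Module k W]
        (f : V →ₗ[k] W),
        (δ W).comp (PiTensorProduct.map fun _ : Fin n => f)
          = (PiTensorProduct.map fun _ : Fin n => f).comp (δ V)) :
    (n ≠ m → ∀ (V : Type) [AddCommGroup V] [Module k V], η V = 0) ∧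
    (∃! a : MonoidAlgebra k (Equiv.Perm (Fin n)),
        ∀ (V : Type) [AddCommGroup V] [Module k V], δ V = permAct k n V a) ∧
    (∀ (a b : MonoidAlgebra k (Equiv.Perm (Fin n))) (V : Type) [AddCommGroup V] [Module k V],
        permAct k n V (a * b) = (permAct k n V a).comp (permAct k n V b)) := by
  classical
  refine ⟨?_, ?_, ?_⟩
  · -- Hom(T_n, T_m) = 0 for n ≠ m
    intro hnm V _ _
    have hy : η (Fin n → k) (tprod k (eb (k := k) n)) = 0 := by
      rw [expand (η (Fin n → k) (tprod k (eb (k := k) n)))]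
      refine Finset.sum_eq_zero fun c _ => ?_
      rcases lt_or_gt_of_ne hnm with h | h
      · -- n < m : c is not injective
        have hni : ¬ Function.Injective c := by
          intro hinj
          have := Fintype.card_le_of_injective c hinj
          simp only [Fintype.card_fin] at this
          omega
        rw [Function.Injective] at hni
        push_neg at hni
        obtain ⟨i₁, i₂, hcc, hne⟩ := hni
        rw [coeffB η hη c i₁ i₂ hne hcc, zero_smul]
      · -- m < n : c is not surjective
        have hns : ∃ j, ∀ i, c i ≠ j := by
          by_contra hcon
          push_neg at hcon
          have hsurj : Function.Surjective c := by
            intro j; obtain ⟨i, hi⟩ := hcon j; exact ⟨i, hi⟩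
          have := Fintype.card_le_of_surjective c hsurj
          simp only [Fintype.card_fin] at this
          omega
        obtain ⟨j, hj⟩ := hns
        rw [coeffA η hη j c hj, zero_smul]
    refine PiTensorProduct.ext (MultilinearMap.ext fun v => ?_)
    simp only [LinearMap.compMultilinearMap_apply, LinearMap.zero_apply]
    rw [det η hη v, hy, map_zero]
  · -- existence and uniqueness of the group algebra element
    set x : ⨂[k] (i : Fin n), (Fin n → k) := δ (Fin n → k) (tprod k (eb (k := k) n)) with hxdef
    set a : MonoidAlgebra k (Equiv.Perm (Fin n)) :=
      ∑ σ : Equiv.Perm (Fin n), MonoidAlgebra.single σ (lam (⇑σ⁻¹) x) with hadef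
    -- expansion of x over permutations
    have hEperm : ∀ σ : Equiv.Perm (Fin n),
        permT k n (Fin n → k) σ (tprod k (eb (k := k) n)) = EE (k := k) ⇑σ⁻¹ := by
      intro σ
      rw [permT_tprod]
      rfl
    have hxexp : x = ∑ σ : Equiv.Perm (Fin n), lam (⇑σ) x • EE (k := k) (⇑σ) := by
      conv_lhs => rw [expand x]
      have himg : ∑ b ∈ (Finset.univ : Finset (Equiv.Perm (Fin n))).image
            (fun σ : Equiv.Perm (Fin n) => ⇑σ), lam (k := k) b x • EE (k := k) b
          = ∑ σ : Equiv.Perm (Fin n), lam (⇑σ) x • EE (k := k) (⇑σ) :=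
        Finset.sum_image (fun σ _ τ _ h => Equiv.coe_fn_injective h)
      rw [← himg]
      refine (Finset.sum_subset (Finset.subset_univ _) fun b _ hb => ?_).symm
      -- b is not a permutation, so not injective
      have hbni : ¬ Function.Injective b := by
        intro hinj
        have hbij : Function.Bijective b := (Finite.injective_iff_bijective).1 hinj
        exact hb (Finset.mem_image.2 ⟨Equiv.ofBijective b hbij, Finset.mem_univ _, rfl⟩)
      rw [Function.Injective] at hbni
      push_neg at hbni
      obtain ⟨i₁, i₂, hcc, hne⟩ := hbni
      rw [coeffB δ hδ b i₁ i₂ hne hcc, zero_smul]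
    have hswap : (∑ σ : Equiv.Perm (Fin n), lam (⇑σ⁻¹) x • EE (k := k) (⇑σ⁻¹))
        = ∑ σ : Equiv.Perm (Fin n), lam (⇑σ) x • EE (k := k) (⇑σ) :=
      Fintype.sum_equiv (Equiv.inv (Equiv.Perm (Fin n)))
        (fun σ : Equiv.Perm (Fin n) => lam (⇑σ⁻¹) x • EE (k := k) (⇑σ⁻¹))
        (fun σ : Equiv.Perm (Fin n) => lam (⇑σ) x • EE (k := k) (⇑σ)) (fun σ => rfl)
    have hxa : permAct k n (Fin n → k) a (tprod k (eb (k := k) n)) = x := by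
      rw [permAct_eq_lift, hadef, map_sum, LinearMap.sum_apply]
      have hterm : ∀ σ : Equiv.Perm (Fin n),
          ((MonoidAlgebra.lift k
            (Module.End k (⨂[k] (i : Fin n), Fin n → k)) (Equiv.Perm (Fin n)) (permTHom k n (Fin n → k)))
            (MonoidAlgebra.single σ (lam (⇑σ⁻¹) x))) (tprod k (eb (k := k) n))
          = lam (⇑σ⁻¹) x • EE (k := k) (⇑σ⁻¹) := by
        intro σ
        rw [MonoidAlgebra.lift_single]
        show lam (⇑σ⁻¹) x • (permT k n (Fin n → k) σ) (tprod k (eb (k := k) n)) = _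
        rw [hEperm]
      rw [Finset.sum_congr rfl fun σ _ => hterm σ, hswap]
      exact hxexp.symm
    -- coefficients of any valid a' are determined
    have hdetcoef : ∀ a' : MonoidAlgebra k (Equiv.Perm (Fin n)),
        permAct k n (Fin n → k) a' (tprod k (eb (k := k) n)) = x →
        ∀ τ : Equiv.Perm (Fin n), a'.coeff τ = lam (⇑τ⁻¹) x := by
      intro a' ha' τ
      have h1 : lam (⇑τ⁻¹) (permAct k n (Fin n → k) a' (tprod k (eb (k := k) n))) = a'.coeff τ := by
        rw [permAct, Finsupp.sum, LinearMap.sum_apply, map_sum]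
        have hterm : ∀ σ ∈ a'.coeff.support,
            lam (⇑τ⁻¹) ((a'.coeff σ • permT k n (Fin n → k) σ) (tprod k (eb (k := k) n)))
            = if σ = τ then a'.coeff σ else 0 := by
          intro σ _
          rw [LinearMap.smul_apply, map_smul, hEperm, lam_EE, smul_eq_mul]
          by_cases h : σ = τ
          · rw [if_pos h, if_pos (by rw [h]), mul_one]
          · rw [if_neg (fun hh => h (by
              have := Equiv.coe_fn_injective hh
              exact inv_injective this)), if_neg h, mul_zero]
        rw [Finset.sum_congr rfl hterm, Finset.sum_ite_eq' a'.coeff.support τ (fun σ => a'.coeff σ)]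
        by_cases hτ : τ ∈ a'.coeff.support
        · rw [if_pos hτ]
        · rw [if_neg hτ]
          exact (Finsupp.notMem_support_iff.1 hτ).symm
      rw [← h1, ha']
    refine ⟨a, ?_, ?_⟩
    · -- existence
      intro V _ _
      refine PiTensorProduct.ext (MultilinearMap.ext fun v => ?_)
      simp only [LinearMap.compMultilinearMap_apply]
      rw [det δ hδ v, ← hxdef, ← hxa, ← permAct_comm_map, map_fv_tprod_eb]
    · -- uniqueness
      intro a' ha'
      have h1 : permAct k n (Fin n → k) a' (tprod k (eb (k := k) n)) = x := by
        rw [← ha' (Fin n → k)]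
      have h2 := hdetcoef a' h1 
      have h3 := hdetcoef a hxa
      ext τ
      rw [h2 τ, h3 τ]
  · -- multiplicativity
    intro a b V _ _
    rw [permAct_eq_lift, permAct_eq_lift, permAct_eq_lift, _root_.map_mul]
    rfl
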